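/- Let 𝔸 and 𝔹 be finite idempotent algebras of the same finite functional signature, let ℂ ≤_sp 𝔸 × 𝔹 be a subdirect product, and let ℂ′ be a subalgebra of ℂ with ℂ′ ⊴ ℂ such that ℂ′ ≤_sp 𝔸 × 𝔹 is again subdirect. Let α, β be the linkedness congruences on A and B induced by ℂ, and α′, β′ the linkedness congruences induced by ℂ′. Then α = α′ and β = β′. -/

import Mathlib

/-- Terms over a functional signature `σ` with arities `ar`, in variables `Fin n`. -/
inductive Term (σ : Type) (ar : σ → ℕ) (n : ℕ) : Type
  | var : Fin n → Term σ ar n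
  | op : (s : σ) → (Fin (ar s) → Term σ ar n) → Term σ ar n

/-- Evaluation of a term in an algebra with basic operations `ops`. -/
def Term.eval {σ : Type} {ar : σ → ℕ} {A : Type} {n : ℕ}
    (ops : (s : σ) → (Fin (ar s) → A) → A) :
    Term σ ar n → (Fin n → A) → A
  | .var i, v => v i
  | .op s ts, v => ops s fun j => (ts j).eval ops v

/-- `B` is closed under all the basic operations `ops`. -/
def ClosedUnder {σ : Type} {ar : σ → ℕ} {A : Type}
    (ops : (s : σ) → (Fin (ar s) → A) → A) (B : Set A) : Prop :=
  ∀ (s : σ) (a : Fin (ar s) → A), (∀ i, a i ∈ B) → ops s a ∈ B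

/-- Coordinatewise operations on a product of two algebras. -/
def prodOps {σ : Type} {ar : σ → ℕ} {A B : Type}
    (opsA : (s : σ) → (Fin (ar s) → A) → A) (opsB : (s : σ) → (Fin (ar s) → B) → B) :
    (s : σ) → (Fin (ar s) → A × B) → A × B :=
  fun s a => (opsA s fun i => (a i).1, opsB s fun i => (a i).2)

/-- The term `t` witnesses that `B` absorbs the subalgebra on `U`. -/
def AbsWitness {σ : Type} {ar : σ → ℕ} {A : Type}
    (ops : (s : σ) → (Fin (ar s) → A) → A) {n : ℕ} (t : Term σ ar n)
    (B U : Set A) : Prop :=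
  ∀ (i : Fin n) (a : Fin n → A), (∀ j, a j ∈ U) → (∀ j, j ≠ i → a j ∈ B) →
    t.eval ops a ∈ B

/-- `B` absorbs the subalgebra on `U` (witnessed by some term). -/
def AbsorbsSub {σ : Type} {ar : σ → ℕ} {A : Type}
    (ops : (s : σ) → (Fin (ar s) → A) → A) (B U : Set A) : Prop :=
  ∃ (n : ℕ) (t : Term σ ar n), AbsWitness ops t B U

/-- The one-step link relation on the first coordinate. -/
def LinkA {A B : Type} (C : Set (A × B)) : A → A → Prop :=
  fun a a' => ∃ b, (a, b) ∈ C ∧ (a', b) ∈ C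

/-- The one-step link relation on the second coordinate. -/
def LinkB {A B : Type} (C : Set (A × B)) : B → B → Prop :=
  fun b b' => ∃ a, (a, b) ∈ C ∧ (a, b') ∈ C

lemma Term.eval_prod {σ : Type} {ar : σ → ℕ} {A B : Type} {n : ℕ}
    (opsA : (s : σ) → (Fin (ar s) → A) → A) (opsB : (s : σ) → (Fin (ar s) → B) → B)
    (t : Term σ ar n) (v : Fin n → A × B) :
    t.eval (prodOps opsA opsB) v
      = (t.eval opsA (fun i => (v i).1), t.eval opsB (fun i => (v i).2)) := by
  induction t with
  | var i => rfl
  | op s ts ih => simp [Term.eval, prodOps, ih]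

lemma Term.eval_const {σ : Type} {ar : σ → ℕ} {A : Type} {n : ℕ}
    (ops : (s : σ) → (Fin (ar s) → A) → A)
    (hid : ∀ (s : σ) (a : A), ops s (fun _ => a) = a)
    (t : Term σ ar n) (a : A) : t.eval ops (fun _ => a) = a := by
  induction t with
  | var i => rfl
  | op s ts ih =>
    show ops s (fun j => (ts j).eval ops (fun _ => a)) = a
    have : (fun j => (ts j).eval ops (fun _ => a)) = (fun _ => a) := funext fun j => ih j
    rw [this, hid]

lemma exists_ar_zero {σ : Type} {ar : σ → ℕ} (t : Term σ ar 0) : ∃ s, ar s = 0 := by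
  induction t with
  | var i => exact i.elim0
  | op s ts ih =>
    rcases Nat.eq_zero_or_pos (ar s) with h | h
    · exact ⟨s, h⟩
    · exact ih ⟨0, h⟩

lemma key_linkA {σ : Type} {ar : σ → ℕ} {A B : Type}
    (opsA : (s : σ) → (Fin (ar s) → A) → A) (opsB : (s : σ) → (Fin (ar s) → B) → B)
    (hidemA : ∀ (s : σ) (a : A), opsA s (fun _ => a) = a)
    (C C' : Set (A × B))
    (hsub : C' ⊆ C)
    (habs : AbsorbsSub (prodOps opsA opsB) C' C)
    (hC'ontoA : ∀ a : A, ∃ b : B, (a, b) ∈ C')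
    {a a' : A} (h : LinkA C a a') :
    Relation.TransGen (LinkA C') a a' := by
  obtain ⟨b, hab, ha'b⟩ := h
  obtain ⟨n, t, ht⟩ := habs
  obtain ⟨b1, hb1⟩ := hC'ontoA a
  obtain ⟨b2, hb2⟩ := hC'ontoA a'
  rcases Nat.eq_zero_or_pos n with hn | hn
  · -- degenerate case: a 0-ary term exists, so A is a subsingleton
    subst hn
    obtain ⟨s, hs⟩ := exists_ar_zero t
    have hAsub : ∀ x y : A, x = y := by
      intro x y
      have hxy : (fun _ : Fin (ar s) => x) = (fun _ : Fin (ar s) => y) := by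
        funext i
        exact absurd i.2 (by omega)
      calc x = opsA s (fun _ => x) := (hidemA s x).symm
        _ = opsA s (fun _ => y) := by rw [hxy]
        _ = y := hidemA s y
    have : a = a' := hAsub a a'
    subst this
    exact Relation.TransGen.single ⟨b1, hb1, hb1⟩
  · -- main construction: walk of length n
    set v : ℕ → A := fun k => t.eval opsA (fun j => if (j : ℕ) < k then a' else a) with hv
    have hv0 : v 0 = a := by
      have : (fun j : Fin n => if (j : ℕ) < 0 then a' else a) = (fun _ => a) := by
        funext j; simp
      rw [hv]; simp only [this]; exact Term.eval_const opsA hidemA t a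
    have hvn : v n = a' := by
      have : (fun j : Fin n => if (j : ℕ) < n then a' else a) = (fun _ => a') := by
        funext j; simp [j.2]
      rw [hv]; simp only [this]; exact Term.eval_const opsA hidemA t a'
    have edge : ∀ k, k < n → LinkA C' (v k) (v (k + 1)) := by
      intro k hk
      set w : Fin n → A × B := fun j =>
        if (j : ℕ) < k then (a', b2) else if (j : ℕ) = k then (a, b) else (a, b1) with hw
      set w' : Fin n → A × B := fun j =>
        if (j : ℕ) < k then (a', b2) else if (j : ℕ) = k then (a', b) else (a, b1) with hw'
      have hwC : ∀ j, w j ∈ C := by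
        intro j; rw [hw]; dsimp only
        split
        · exact hsub hb2
        · split
          · exact hab
          · exact hsub hb1
      have hw'C : ∀ j, w' j ∈ C := by
        intro j; rw [hw']; dsimp only
        split
        · exact hsub hb2
        · split
          · exact ha'b
          · exact hsub hb1
      have hwC' : ∀ j, j ≠ (⟨k, hk⟩ : Fin n) → w j ∈ C' := by
        intro j hj; rw [hw]; dsimp only
        split
        · exact hb2
        · split
          · rename_i h1 h2
            exact absurd (Fin.ext h2) hj
          · exact hb1
      have hw'C' : ∀ j, j ≠ (⟨k, hk⟩ : Fin n) → w' j ∈ C' := by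
        intro j hj; rw [hw']; dsimp only
        split
        · exact hb2
        · split
          · rename_i h1 h2
            exact absurd (Fin.ext h2) hj
          · exact hb1
      have h1 : t.eval (prodOps opsA opsB) w ∈ C' := ht ⟨k, hk⟩ w hwC hwC'
      have h2 : t.eval (prodOps opsA opsB) w' ∈ C' := ht ⟨k, hk⟩ w' hw'C hw'C'
      rw [Term.eval_prod] at h1 h2
      have e1 : (fun j => (w j).1) = (fun j : Fin n => if (j : ℕ) < k then a' else a) := by
        funext j; rw [hw]; dsimp only; split
        · rfl
        · split <;> rfl
      have e1' : (fun j => (w' j).1) = (fun j : Fin n => if (j : ℕ) < k + 1 then a' else a) := by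
        funext j; rw [hw']; dsimp only
        by_cases hlt : (j : ℕ) < k
        · simp [hlt, Nat.lt_succ_of_lt hlt]
        · by_cases heq : (j : ℕ) = k
          · simp [hlt, heq]
          · have : ¬ (j : ℕ) < k + 1 := by omega
            simp [hlt, heq, this]
      have e2 : (fun j => (w j).2) = (fun j => (w' j).2) := by
        funext j; rw [hw, hw']; dsimp only; split
        · rfl
        · split <;> rfl
      rw [e1] at h1
      rw [e1', ← e2] at h2
      exact ⟨_, h1, h2⟩
    have chain : ∀ k, k ≤ n → k ≠ 0 → Relation.TransGen (LinkA C') (v 0) (v k) := by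
      intro k
      induction k with
      | zero => intro _ h; exact absurd rfl h
      | succ m ih =>
        intro hk _
        rcases Nat.eq_zero_or_pos m with hm | hm
        · subst hm
          exact Relation.TransGen.single (edge 0 (by omega))
        · exact (ih (by omega) (by omega)).tail (edge m (by omega))
    have := chain n le_rfl (by omega)
    rwa [hv0, hvn] at this

/-- if `ℂ' ⊴ ℂ ≤_sp 𝔸 × 𝔹` with `ℂ'` again subdirect (finite idempotent
algebras), then the linkedness congruences induced by `ℂ` and `ℂ'` coincide. -/
theorem absorbing_subdirect_same_linkedness
    {σ : Type} [Finite σ] {ar : σ → ℕ} {A B : Type} [Finite A] [Finite B]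
    [Nonempty A] [Nonempty B]
    (opsA : (s : σ) → (Fin (ar s) → A) → A) (opsB : (s : σ) → (Fin (ar s) → B) → B)
    (hidemA : ∀ (s : σ) (a : A), opsA s (fun _ => a) = a)
    (hidemB : ∀ (s : σ) (b : B), opsB s (fun _ => b) = b)
    (C C' : Set (A × B))
    (hCclosed : ClosedUnder (prodOps opsA opsB) C)
    (hContoA : ∀ a : A, ∃ b : B, (a, b) ∈ C)
    (hContoB : ∀ b : B, ∃ a : A, (a, b) ∈ C)
    (hsub : C' ⊆ C) (hC'ne : C'.Nonempty)
    (hC'closed : ClosedUnder (prodOps opsA opsB) C')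
    (habs : AbsorbsSub (prodOps opsA opsB) C' C)
    (hC'ontoA : ∀ a : A, ∃ b : B, (a, b) ∈ C')
    (hC'ontoB : ∀ b : B, ∃ a : A, (a, b) ∈ C') :
    Relation.TransGen (LinkA C) = Relation.TransGen (LinkA C') ∧
    Relation.TransGen (LinkB C) = Relation.TransGen (LinkB C') := by
  have keyA : ∀ x y : A, LinkA C x y → Relation.TransGen (LinkA C') x y :=
    fun _ _ h => key_linkA opsA opsB hidemA C C' hsub habs hC'ontoA h
  have keyB : ∀ x y : B, LinkB C x y → Relation.TransGen (LinkB C') x y := by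
    intro x y h
    let Cs : Set (B × A) := {p | (p.2, p.1) ∈ C}
    let Cs' : Set (B × A) := {p | (p.2, p.1) ∈ C'}
    have hsubs : Cs' ⊆ Cs := fun p hp => hsub hp
    have habss : AbsorbsSub (prodOps opsB opsA) Cs' Cs := by
      obtain ⟨n, t, ht⟩ := habs
      refine ⟨n, t, ?_⟩
      intro i as h1 h2
      have hmem := ht i (fun j => ((as j).2, (as j).1)) (fun j => h1 j) (fun j hj => h2 j hj)
      rw [Term.eval_prod] at hmem
      show _ ∈ Cs'
      rw [Term.eval_prod]
      exact hmem
    exact key_linkA opsB opsA hidemB Cs Cs' hsubs habss (fun b => hC'ontoB b) h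
  constructor
  · funext x y
    apply propext
    constructor
    · intro h
      induction h with
      | single h => exact keyA _ _ h
      | tail _ h ih => exact ih.trans (keyA _ _ h)
    · exact Relation.TransGen.mono (r := LinkA C') (p := LinkA C) (fun u v huv =>
        huv.imp fun b hb => ⟨hsub hb.1, hsub hb.2⟩) x y
  · funext x y
    apply propext
    constructor
    · intro h
      induction h with
      | single h => exact keyB _ _ h
      | tail _ h ih => exact ih.trans (keyB _ _ h)
    · exact Relation.TransGen.mono (r := LinkB C') (p := LinkB C) (fun u v huv =>
        huv.imp fun a ha => ⟨hsub ha.1, hsub ha.2⟩) x y
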